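/- arXiv:1303.6746 — 3 statements merged into one kernel-verified Lean document; each statement's English description precedes it below -/
import Mathlib

section
/- Fix K ≥ 2 arms and functions U, L : {1,…,K} → ℝ; set s_k = U_k − L_k and B_k = max_{i≠k} U_i − L_k. Let J be an arm with B_J ≤ B_k for all arms k, and let j ≠ J be an arm with U_j ≥ U_i for all arms i ≠ J. Then: (i) if s_j ≥ s_J, then L_j ≤ L_J; and (ii) if s_J ≥ s_j, then U_j ≤ U_J. -/
open Finset

/-- With at least two arms, the set of arms other than `k` is nonempty. -/
lemma eraseNe {K : ℕ} (hK : 2 ≤ K) (k : Fin K) :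
    ((univ : Finset (Fin K)).erase k).Nonempty := by
  apply card_pos.mp
  rw [card_erase_of_mem (mem_univ k), card_univ, Fintype.card_fin]
  omega

/-- The gap index `B_k = max_{i ≠ k} U_i − L_k`. -/
noncomputable def gapB {K : ℕ} (hK : 2 ≤ K) (U L : Fin K → ℝ) (k : Fin K) : ℝ :=
  ((univ : Finset (Fin K)).erase k).sup' (eraseNe hK k) U - L k

/-- Lemma A2: if `J` minimizes the gap index and `j ≠ J` is the best runner-up
(maximizing `U` among arms other than `J`), then:
(i) if `s_j ≥ s_J` then `L_j ≤ L_J`, and (ii) if `s_J ≥ s_j` then `U_j ≤ U_J`,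
where `s_k = U_k − L_k` is the confidence diameter. -/
theorem bound_order {K : ℕ} (hK : 2 ≤ K) (U L : Fin K → ℝ) (J j : Fin K)
    (hJ : ∀ k, gapB hK U L J ≤ gapB hK U L k)
    (hjJ : j ≠ J) (hj : ∀ i, i ≠ J → U i ≤ U j) :
    ((U J - L J ≤ U j - L j) → L j ≤ L J) ∧
      ((U j - L j ≤ U J - L J) → U j ≤ U J) := by
  -- sup over erase J equals U j
  have hsupJ : ((univ : Finset (Fin K)).erase J).sup' (eraseNe hK J) U = U j := by
    apply le_antisymm
    · exact Finset.sup'_le _ _ fun i hi => hj i (Finset.ne_of_mem_erase hi)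
    · exact Finset.le_sup' U (Finset.mem_erase.mpr ⟨hjJ, mem_univ j⟩)
  -- sup over erase j is ≤ max (U J) (U j)
  obtain ⟨i, hi, hieq⟩ := Finset.exists_mem_eq_sup' (eraseNe hK j) U
  have key := hJ j
  rw [gapB, gapB, hsupJ, hieq] at key
  -- key : U j - L J ≤ U i - L j, with i ≠ j
  have hij : i ≠ j := Finset.ne_of_mem_erase hi
  by_cases hiJ : i = J
  · subst hiJ
    constructor
    · intro h; linarith
    · intro h; linarith
  · have hUi : U i ≤ U j := hj i hiJ
    have hL : L j ≤ L J := by linarith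
    exact ⟨fun _ => hL, fun h => by linarith⟩
end

section
/- Fix K ≥ 2 arms and functions U, L : {1,…,K} → ℝ; set s_k = U_k − L_k and B_k = max_{i≠k} U_i − L_k. Let J be an arm with B_J ≤ B_k for all arms k, let j ≠ J be an arm with U_j ≥ U_i for all arms i ≠ J, and let a ∈ {j, J} be an arm with s_a = max(s_j, s_J). Then the minimal gap index is bounded by the uncertainty of the pulled arm: B_J ≤ s_a. -/
open Finset

/-- Corollary A3: if `J` minimizes the gap index, `j ≠ J` is the best runner-up,
and the pulled arm `a ∈ {j, J}` has the larger confidence diameter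
`s_a = max(s_j, s_J)` (where `s_k = U_k − L_k`), then the minimal gap index is
bounded above by the uncertainty of the pulled arm: `B_J ≤ s_a`. -/
theorem min_gap_le_uncertainty {K : ℕ} (hK : 2 ≤ K) (U L : Fin K → ℝ) (J j a : Fin K)
    (hJ : ∀ k, gapB hK U L J ≤ gapB hK U L k)
    (hjJ : j ≠ J) (hj : ∀ i, i ≠ J → U i ≤ U j)
    (haMem : a = j ∨ a = J)
    (haMax : U a - L a = max (U j - L j) (U J - L J)) :
    gapB hK U L J ≤ U a - L a := by
  rw [haMax]
  rcases le_total (U j) (U J) with h | h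
  · -- B_J ≤ s_J since max_{i≠J} U_i ≤ U_j ≤ U_J
    refine le_max_of_le_right ?_
    unfold gapB
    have : ((univ : Finset (Fin K)).erase J).sup' (eraseNe hK J) U ≤ U J := by
      apply Finset.sup'_le
      intro i hi
      exact (hj i (Finset.ne_of_mem_erase hi)).trans h
    linarith
  · -- B_J ≤ B_j ≤ s_j
    refine le_max_of_le_left ((hJ j).trans ?_)
    unfold gapB
    have : ((univ : Finset (Fin K)).erase j).sup' (eraseNe hK j) U ≤ U j := by
      apply Finset.sup'_le
      intro i hi
      by_cases hiJ : i = J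
      · rw [hiJ]; exact h
      · exact hj i hiJ
    linarith
end

section
/- Let x_1, …, x_K ∈ ℝ^d with x_k ≠ 0, let σ, η > 0, let β ≥ 0, and let N_1, …, N_K be nonnegative reals. Let Σ̂ = (σ^{-2} Σ_{i=1}^K N_i x_i x_iᵀ + η^{-2} I)⁻¹. Then the confidence diameter of arm k satisfies 2β √(x_kᵀ Σ̂ x_k) ≤ 2β √( σ² ‖x_k‖² / (σ²/η² + N_k ‖x_k‖²) ); i.e., s_k is bounded by g_k(N_k) where g_k(N) = 2β √(σ² ‖x_k‖² / (σ²/η² + N ‖x_k‖²)). -/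
open Matrix Finset

lemma quad_form_eval {d K : ℕ} (x : Fin K → (Fin d → ℝ)) (N : Fin K → ℝ) (σ η : ℝ)
    (v : Fin d → ℝ) :
    v ⬝ᵥ ((σ ^ (-2 : ℤ) • ∑ i, N i • vecMulVec (x i) (x i) +
        η ^ (-2 : ℤ) • (1 : Matrix (Fin d) (Fin d) ℝ)) *ᵥ v) =
      σ ^ (-2 : ℤ) * ∑ i, N i * (x i ⬝ᵥ v) ^ 2 + η ^ (-2 : ℤ) * (v ⬝ᵥ v) := by
  have hmv : (∑ i, N i • vecMulVec (x i) (x i)) *ᵥ v = ∑ i, (N i * (x i ⬝ᵥ v)) • x i := by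
    ext j
    simp only [Matrix.mulVec, dotProduct, Matrix.sum_apply, Matrix.smul_apply,
      Matrix.vecMulVec_apply, smul_eq_mul, Pi.smul_apply, Finset.sum_apply]
    simp only [Finset.sum_mul, Finset.mul_sum]
    rw [Finset.sum_comm]
    exact Finset.sum_congr rfl fun i _ => Finset.sum_congr rfl fun l _ => by ring
  rw [Matrix.add_mulVec, Matrix.smul_mulVec, Matrix.smul_mulVec,
    Matrix.one_mulVec, dotProduct_add, dotProduct_smul, dotProduct_smul, hmv,
    smul_eq_mul, smul_eq_mul]
  congr 1
  congr 1
  have hsplit : v ⬝ᵥ ∑ i, (N i * (x i ⬝ᵥ v)) • x i =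
      ∑ i, (N i * (x i ⬝ᵥ v)) * (v ⬝ᵥ x i) := by
    simp only [dotProduct, Finset.sum_apply, Pi.smul_apply, smul_eq_mul,
      Finset.mul_sum]
    rw [Finset.sum_comm]
    refine Finset.sum_congr rfl fun i _ => Finset.sum_congr rfl fun l _ => by ring
  rw [hsplit]
  refine Finset.sum_congr rfl fun i _ => ?_
  rw [dotProduct_comm v (x i), sq]
  ring

/-- The confidence diameter of arm `k` in the linear-Gaussian model is bounded
by `g_k(N_k)`: with posterior covariance
`Σ̂ = (σ⁻² Σ_i N_i x_i x_iᵀ + η⁻² I)⁻¹`, one has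
`2β √(x_kᵀ Σ̂ x_k) ≤ 2β √(σ² ‖x_k‖² / (σ²/η² + N_k ‖x_k‖²))`,
where `‖x_k‖² = x_k ⬝ᵥ x_k` is the squared Euclidean norm. -/
theorem confidence_diameter_bound {d K : ℕ} (x : Fin K → (Fin d → ℝ))
    (k : Fin K)
    (σ η β : ℝ) (hσ : 0 < σ) (hη : 0 < η) (hβ : 0 ≤ β)
    (N : Fin K → ℝ) (hN : ∀ i, 0 ≤ N i) :
    let Shat : Matrix (Fin d) (Fin d) ℝ :=
      (σ ^ (-2 : ℤ) • ∑ i, N i • vecMulVec (x i) (x i) +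
        η ^ (-2 : ℤ) • (1 : Matrix (Fin d) (Fin d) ℝ))⁻¹
    2 * β * Real.sqrt (x k ⬝ᵥ (Shat *ᵥ x k)) ≤
      2 * β * Real.sqrt (σ ^ 2 * (x k ⬝ᵥ x k) /
        (σ ^ 2 / η ^ 2 + N k * (x k ⬝ᵥ x k))) := by
  intro Shat
  set A : Matrix (Fin d) (Fin d) ℝ :=
    σ ^ (-2 : ℤ) • ∑ i, N i • vecMulVec (x i) (x i) +
      η ^ (-2 : ℤ) • (1 : Matrix (Fin d) (Fin d) ℝ) with hAdef
  have hσ2 : (0:ℝ) < σ ^ (-2 : ℤ) := by positivity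
  have hη2 : (0:ℝ) < η ^ (-2 : ℤ) := by positivity
  -- A is positive definite
  have hA : A.PosDef := by
    rw [Matrix.posDef_iff_dotProduct_mulVec]
    constructor
    · ext i j
      simp only [Matrix.conjTranspose_apply, star_trivial, hAdef, Matrix.add_apply,
        Matrix.smul_apply, Matrix.sum_apply, Matrix.vecMulVec_apply, Matrix.one_apply,
        smul_eq_mul]
      have hs : ∑ l, N l * (x l j * x l i) = ∑ l, N l * (x l i * x l j) :=
        Finset.sum_congr rfl fun l _ => by ring
      rw [hs]
      by_cases h : i = j
      · subst h; rfl
      · rw [if_neg (fun hh => h hh.symm), if_neg h]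
    · intro v hv
      rw [star_trivial, quad_form_eval]
      have h1 : 0 ≤ ∑ i, N i * (x i ⬝ᵥ v) ^ 2 :=
        Finset.sum_nonneg fun i _ => mul_nonneg (hN i) (sq_nonneg _)
      have h2 : 0 < v ⬝ᵥ v := by
        rcases lt_or_eq_of_le (dotProduct_star_self_nonneg v) with h | h
        · simpa [star_trivial] using h
        · exfalso; apply hv
          rw [← dotProduct_star_self_eq_zero (v := v)]
          simpa [star_trivial] using h.symm
      exact add_pos_of_nonneg_of_pos (mul_nonneg hσ2.le h1) (mul_pos hη2 h2)
  have hdet : IsUnit A.det := (Matrix.isUnit_iff_isUnit_det A).mp hA.isUnit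
  set y : Fin d → ℝ := A⁻¹ *ᵥ x k with hy
  have hxy : A *ᵥ y = x k := by
    rw [hy, Matrix.mulVec_mulVec, Matrix.mul_nonsing_inv A hdet, Matrix.one_mulVec]
  set t : ℝ := x k ⬝ᵥ y with ht
  set X : ℝ := x k ⬝ᵥ x k with hX
  have hXnn : 0 ≤ X := by
    rw [hX]; exact Finset.sum_nonneg fun i _ => mul_self_nonneg _
  have hc : (0:ℝ) < η ^ (-2 : ℤ) + σ ^ (-2 : ℤ) * (N k * X) :=
    add_pos_of_pos_of_nonneg hη2 (mul_nonneg hσ2.le (mul_nonneg (hN k) hXnn))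
  set c : ℝ := η ^ (-2 : ℤ) + σ ^ (-2 : ℤ) * (N k * X) with hcdef
  -- key inequality t ≤ X / c
  have key : t ≤ X / c := by
    have hquad : t = σ ^ (-2 : ℤ) * ∑ i, N i * (x i ⬝ᵥ y) ^ 2 +
        η ^ (-2 : ℤ) * (y ⬝ᵥ y) := by
      rw [ht, ← hxy, dotProduct_comm]
      exact quad_form_eval x N σ η y
    have hsum : σ ^ (-2 : ℤ) * (N k * t ^ 2) + η ^ (-2 : ℤ) * (y ⬝ᵥ y) ≤ t := by
      have hone : N k * t ^ 2 ≤ ∑ i, N i * (x i ⬝ᵥ y) ^ 2 := by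
        have := Finset.single_le_sum (f := fun i => N i * (x i ⬝ᵥ y) ^ 2)
          (fun i _ => mul_nonneg (hN i) (sq_nonneg _)) (Finset.mem_univ k)
        simpa [← ht] using this
      have h' := mul_le_mul_of_nonneg_left hone hσ2.le
      linarith [hquad.ge, hquad.le]
    have hCS : t ^ 2 ≤ X * (y ⬝ᵥ y) := by
      rw [ht, hX]
      simpa [dotProduct, sq] using
        Finset.sum_mul_sq_le_sq_mul_sq Finset.univ (x k) y
    rcases le_or_gt t 0 with h | h
    · exact h.trans (by positivity)
    · rw [le_div_iff₀ hc]
      have hX0 : 0 < X := by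
        by_contra hX0
        push_neg at hX0
        have hXeq : X = 0 := le_antisymm hX0 hXnn
        rw [hXeq, zero_mul] at hCS
        nlinarith
      have hynn : t ^ 2 / X ≤ y ⬝ᵥ y := by
        rw [div_le_iff₀ hX0]
        nlinarith
      have hkey2 : σ ^ (-2 : ℤ) * (N k * t ^ 2) + η ^ (-2 : ℤ) * (t ^ 2 / X) ≤ t := by
        refine le_trans ?_ hsum
        have := mul_le_mul_of_nonneg_left hynn hη2.le
        linarith
      have h2 : t ^ 2 * c ≤ t * X := by
        rw [hcdef]
        have hm := mul_le_mul_of_nonneg_right hkey2 hX0.le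
        calc t ^ 2 * (η ^ (-2 : ℤ) + σ ^ (-2 : ℤ) * (N k * X))
            = (σ ^ (-2 : ℤ) * (N k * t ^ 2) + η ^ (-2 : ℤ) * (t ^ 2 / X)) * X := by
              field_simp; ring
          _ ≤ t * X := hm
      nlinarith
  -- conclude
  have hRHS : σ ^ 2 * X / (σ ^ 2 / η ^ 2 + N k * X) = X / c := by
    rw [hcdef]
    have h1 : σ ^ 2 / η ^ 2 + N k * X =
        σ ^ 2 * (η ^ (-2 : ℤ) + σ ^ (-2 : ℤ) * (N k * X)) := by
      have hs : σ ^ (-2 : ℤ) = (σ ^ 2)⁻¹ := by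
        rw [_root_.zpow_neg, zpow_two, sq]
      have hh : η ^ (-2 : ℤ) = (η ^ 2)⁻¹ := by
        rw [_root_.zpow_neg, zpow_two, sq]
      rw [hs, hh]
      field_simp
    rw [h1, mul_div_mul_left _ _ (by positivity : (σ:ℝ) ^ 2 ≠ 0)]
  have hsq : Real.sqrt (x k ⬝ᵥ (Shat *ᵥ x k)) ≤
      Real.sqrt (σ ^ 2 * (x k ⬝ᵥ x k) / (σ ^ 2 / η ^ 2 + N k * (x k ⬝ᵥ x k))) := by
    apply Real.sqrt_le_sqrt
    rw [← hX, hRHS]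
    exact key
  exact mul_le_mul_of_nonneg_left hsq (by positivity)
end
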